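/- Let Δ be a pure strongly connected d-dimensional simplicial complex on [n] with a unit interval order, and suppose Δ is not a simplex. Then the deletion del_Δ(n) of the largest vertex n is a pure strongly connected d-dimensional unit interval complex on vertex set [n-1]. -/

import Mathlib

open Finset

/-- A simplicial complex on vertex set `ℕ`, given as the finite family of all of its
faces, closed under taking subsets. -/
def IsComplex (Δ : Finset (Finset ℕ)) : Prop :=
  ∀ F ∈ Δ, ∀ G ⊆ F, G ∈ Δ

/-- `F` is a facet (maximal face) of `Δ`. -/
def IsFacet (Δ : Finset (Finset ℕ)) (F : Finset ℕ) : Prop :=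
  F ∈ Δ ∧ ∀ G ∈ Δ, F ⊆ G → F = G

/-- The finset of facets of `Δ`. -/
def facets (Δ : Finset (Finset ℕ)) : Finset (Finset ℕ) :=
  Δ.filter fun F => ∀ G ∈ Δ, F ⊆ G → F = G

/-- `Δ` is pure of dimension `d`: every facet has `d + 1` vertices. -/
def IsPure (d : ℕ) (Δ : Finset (Finset ℕ)) : Prop :=
  ∀ F, IsFacet Δ F → F.card = d + 1

/-- Dual graph of a pure `d`-dimensional complex: nodes are facets, two facets are
adjacent iff they share a face with `d` elements (a codimension-one face). -/
def dualGraph (d : ℕ) (Δ : Finset (Finset ℕ)) : SimpleGraph {F // F ∈ facets Δ} :=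
  SimpleGraph.fromRel fun F G => ((F : Finset ℕ) ∩ (G : Finset ℕ)).card = d

/-- `Δ` is strongly connected: its dual graph is connected. -/
def StronglyConnected (d : ℕ) (Δ : Finset (Finset ℕ)) : Prop :=
  (dualGraph d Δ).Connected

/-- The labeling of the vertices by `ℕ` is a unit interval order: whenever
`F = {v₀ < v₁ < ⋯ < v_d}` is a facet, every `(d+1)`-element subset of the integer
interval `{v₀, v₀+1, …, v_d}` is a facet. -/
def UnitIntervalOrder (d : ℕ) (Δ : Finset (Finset ℕ)) : Prop :=
  ∀ F, IsFacet Δ F → ∀ hF : F.Nonempty,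
    ∀ S ⊆ Finset.Icc (F.min' hF) (F.max' hF), S.card = d + 1 → IsFacet Δ S

/-- The increasing list of the vertices of a face. -/
def sortedList (F : Finset ℕ) : List ℕ := F.sort (· ≤ ·)

/-- Lexicographic order on faces, comparing the increasing lists of vertices. -/
def faceLexLt (F G : Finset ℕ) : Prop :=
  List.Lex (· < ·) (sortedList F) (sortedList G)

/-- `L` lists exactly the facets of `Δ`, in lexicographic order. -/
def LexFacetList (Δ : Finset (Finset ℕ)) (L : List (Finset ℕ)) : Prop :=
  L.Nodup ∧ L.toFinset = facets Δ ∧ L.Pairwise faceLexLt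

/-- `L` is a shelling order of the pure `d`-dimensional complex `Δ`: it lists the
facets of `Δ` so that for each `k`, the intersection of `⟨L[k+1]⟩` with
`⟨L[0], …, L[k]⟩` is pure of dimension `d - 1`, i.e. it is nonempty and each of
its faces is contained in a common `d`-element face of `L[k+1]` and some earlier
facet. -/
def IsShellingOrder (d : ℕ) (Δ : Finset (Finset ℕ)) (L : List (Finset ℕ)) : Prop :=
  L.Nodup ∧ L.toFinset = facets Δ ∧
  ∀ (k : ℕ) (hk : k + 1 < L.length),
    (∃ τ ⊆ L.get ⟨k + 1, hk⟩, τ.card = d ∧ ∃ G ∈ L.take (k + 1), τ ⊆ G) ∧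
    (∀ σ ⊆ L.get ⟨k + 1, hk⟩, (∃ G ∈ L.take (k + 1), σ ⊆ G) →
      ∃ τ, σ ⊆ τ ∧ τ ⊆ L.get ⟨k + 1, hk⟩ ∧ τ.card = d ∧ ∃ G ∈ L.take (k + 1), τ ⊆ G)

/-- `Δ` is shellable (as a pure `d`-dimensional complex). -/
def Shellable (d : ℕ) (Δ : Finset (Finset ℕ)) : Prop :=
  ∃ L, IsShellingOrder d Δ L

/-- The link of the vertex `v` in `Δ`. -/
def linkC (Δ : Finset (Finset ℕ)) (v : ℕ) : Finset (Finset ℕ) :=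
  Δ.filter fun E => v ∉ E ∧ insert v E ∈ Δ

/-- The deletion of the vertex `v` from `Δ`. -/
def delC (Δ : Finset (Finset ℕ)) (v : ℕ) : Finset (Finset ℕ) :=
  Δ.filter fun E => v ∉ E

/-- Vertex decomposability: `Δ` is a simplex (possibly the void/empty simplex `{∅}`),
or it has a shedding vertex `v` whose link and deletion are vertex decomposable and
such that every facet of the deletion is a facet of `Δ`. -/
inductive VertexDecomposable : Finset (Finset ℕ) → Prop
  | simplex (V : Finset ℕ) : VertexDecomposable V.powerset
  | shed (Δ : Finset (Finset ℕ)) (v : ℕ) :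
      VertexDecomposable (linkC Δ v) → VertexDecomposable (delC Δ v) →
      (∀ F, IsFacet (delC Δ v) F → IsFacet Δ F) → VertexDecomposable Δ

lemma mem_facets' {Δ : Finset (Finset ℕ)} {F : Finset ℕ} :
    F ∈ facets Δ ↔ IsFacet Δ F := by
  simp [facets, IsFacet, Finset.mem_filter]

lemma exists_facet_superset {Δ : Finset (Finset ℕ)} {G : Finset ℕ} (hG : G ∈ Δ) :
    ∃ F, IsFacet Δ F ∧ G ⊆ F := by
  have hne : (Δ.filter fun H => G ⊆ H).Nonempty := ⟨G, by simp [hG]⟩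
  obtain ⟨F, hF, hmax⟩ := (Δ.filter fun H => G ⊆ H).exists_max_image Finset.card hne
  rw [Finset.mem_filter] at hF
  refine ⟨F, ⟨hF.1, fun H hH hFH => ?_⟩, hF.2⟩
  have hHmem : H ∈ Δ.filter fun H => G ⊆ H := by
    rw [Finset.mem_filter]; exact ⟨hH, hF.2.trans hFH⟩
  exact Finset.eq_of_subset_of_card_le hFH (hmax H hHmem)

/-- Johnson-graph connectivity: any two `(d+1)`-subsets of `J` are connected in the
dual graph, provided all `(d+1)`-subsets of `J` are facets. -/
lemma johnson_reach (d : ℕ) (Δ' : Finset (Finset ℕ)) (J : Finset ℕ)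
    (hall : ∀ S ⊆ J, S.card = d + 1 → S ∈ facets Δ') :
    ∀ (k : ℕ) (A B : Finset ℕ) (hA : A ∈ facets Δ') (hB : B ∈ facets Δ'),
      A ⊆ J → B ⊆ J → A.card = d + 1 → B.card = d + 1 → (B \ A).card = k →
      (dualGraph d Δ').Reachable ⟨A, hA⟩ ⟨B, hB⟩ := by
  intro k
  induction k with
  | zero =>
    intro A B hA hB hAJ hBJ hAc hBc hk
    have hBA : B ⊆ A := by
      rw [← Finset.sdiff_eq_empty_iff_subset]
      exact Finset.card_eq_zero.mp hk
    have : B = A := Finset.eq_of_subset_of_card_le hBA (by omega)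
    subst this; rfl
  | succ k ih =>
    intro A B hA hB hAJ hBJ hAc hBc hk
    have hb : ∃ b, b ∈ B \ A := Finset.card_pos.mp (by omega) |>.imp fun b h => h
    obtain ⟨b, hb⟩ := hb
    rw [Finset.mem_sdiff] at hb
    have ha : ∃ a, a ∈ A \ B := by
      by_contra h
      push_neg at h
      have : A ⊆ B := fun x hx => by
        by_contra hxB; exact h x (Finset.mem_sdiff.mpr ⟨hx, hxB⟩)
      have : A = B := Finset.eq_of_subset_of_card_le this (by omega)
      subst this
      simp at hk
    obtain ⟨a, ha⟩ := ha
    rw [Finset.mem_sdiff] at ha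
    set A' := insert b (A.erase a) with hA'def
    have hbe : b ∉ A.erase a := fun h => hb.2 (Finset.mem_of_mem_erase h)
    have hA'c : A'.card = d + 1 := by
      rw [hA'def, Finset.card_insert_of_notMem hbe, Finset.card_erase_of_mem ha.1]
      omega
    have hA'J : A' ⊆ J := by
      rw [hA'def]
      exact Finset.insert_subset (hBJ hb.1) ((Finset.erase_subset a A).trans hAJ)
    have hA' : A' ∈ facets Δ' := hall A' hA'J hA'c
    have hAA' : A ∩ A' = A.erase a := by
      ext x
      simp only [hA'def, Finset.mem_inter, Finset.mem_insert, Finset.mem_erase]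
      constructor
      · rintro ⟨hxA, hx | hx⟩
        · exact absurd (hx ▸ hxA) hb.2
        · exact hx
      · rintro ⟨hxa, hxA⟩; exact ⟨hxA, Or.inr ⟨hxa, hxA⟩⟩
    have hne : A ≠ A' := fun h => by
      have : a ∈ A' := h ▸ ha.1
      rw [hA'def, Finset.mem_insert, Finset.mem_erase] at this
      rcases this with h' | h'
      · exact hb.2 (h' ▸ ha.1)
      · exact h'.1 rfl
    have hadj : (dualGraph d Δ').Adj ⟨A, hA⟩ ⟨A', hA'⟩ := by
      rw [dualGraph, SimpleGraph.fromRel_adj]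
      refine ⟨fun h => hne (congrArg Subtype.val h), Or.inl ?_⟩
      rw [hAA', Finset.card_erase_of_mem ha.1, hAc]; omega
    have hBA' : (B \ A').card = k := by
      have : B \ A' = (B \ A).erase b := by
        ext x
        simp only [hA'def, Finset.mem_sdiff, Finset.mem_insert, Finset.mem_erase]
        constructor
        · rintro ⟨hxB, hx⟩
          push_neg at hx
          refine ⟨hx.1, hxB, fun hxA => ?_⟩
          have hxa : x ≠ a := by rintro rfl; exact ha.2 hxB
          exact hx.2 hxa hxA
        · rintro ⟨hxb, hxB, hxA⟩
          refine ⟨hxB, ?_⟩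
          rintro (rfl | ⟨-, h⟩)
          exacts [hxb rfl, hxA h]
      rw [this, Finset.card_erase_of_mem (Finset.mem_sdiff.mpr hb), hk]; omega
    exact hadj.reachable.trans (ih A' B hA' hB hA'J hBJ hA'c hBc hBA')

theorem stmt4 (n d : ℕ) (Δ : Finset (Finset ℕ))
    (hC : IsComplex Δ) (hP : IsPure d Δ) (hSC : StronglyConnected d Δ)
    (hU : UnitIntervalOrder d Δ) (hV : Δ.sup id = Finset.Icc 1 n)
    (hns : Δ ≠ (Finset.Icc 1 n).powerset) :
    IsComplex (delC Δ n) ∧ IsPure d (delC Δ n) ∧ StronglyConnected d (delC Δ n) ∧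
    UnitIntervalOrder d (delC Δ n) ∧ (delC Δ n).sup id = Finset.Icc 1 (n - 1) := by
  have hsub : ∀ G ∈ Δ, G ⊆ Icc 1 n := fun G hG => by
    rw [← hV]; exact Finset.le_sup (f := id) hG
  have hfrome : ∃ F, IsFacet Δ F := by
    obtain ⟨⟨F, hF⟩⟩ := hSC.nonempty
    exact ⟨F, mem_facets'.mp hF⟩
  have hn1 : 1 ≤ n := by
    by_contra h
    have hn0 : n = 0 := by omega
    subst hn0
    apply hns
    have hIcc : Finset.Icc 1 0 = (∅ : Finset ℕ) := Finset.Icc_eq_empty (by omega)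
    rw [hIcc, Finset.powerset_empty]
    apply Finset.Subset.antisymm
    · intro G hG
      have h2 := hsub G hG
      rw [hIcc, Finset.subset_empty] at h2
      simp [h2]
    · intro G hG
      rw [Finset.mem_singleton] at hG
      subst hG
      obtain ⟨F, hF⟩ := hfrome
      exact hC F hF.1 ∅ (Finset.empty_subset F)
  have hnotfull : ∀ F, IsFacet Δ F → F ≠ Icc 1 n := by
    intro F hF hEq
    apply hns
    apply Finset.Subset.antisymm
    · intro G hG; rw [Finset.mem_powerset]; exact hsub G hG
    · intro S hS; rw [Finset.mem_powerset] at hS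
      exact hC F hF.1 S (hEq ▸ hS)
  have hUapp : ∀ F (hF : IsFacet Δ F) (hnF : n ∈ F),
      ∀ S ⊆ Icc (F.min' ⟨n, hnF⟩) n, S.card = d + 1 → IsFacet Δ S := by
    intro F hF hnF S hS hc
    have hmax : F.max' ⟨n, hnF⟩ = n :=
      le_antisymm (Finset.max'_le _ _ _ fun x hx => (Finset.mem_Icc.mp (hsub F hF.1 hx)).2)
        (Finset.le_max' _ _ hnF)
    have := hU F hF ⟨n, hnF⟩
    rw [hmax] at this
    exact this S hS hc
  have hcard_erase : ∀ F, IsFacet Δ F → n ∈ F → (F.erase n).card = d := by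
    intro F hF h
    rw [Finset.card_erase_of_mem h, hP F hF]; omega
    -- d+1-1
  have L1 : ∀ F (hF : IsFacet Δ F) (hnF : n ∈ F),
      d + 1 ≤ n - F.min' ⟨n, hnF⟩ →
      ∃ H, IsFacet Δ H ∧ n ∉ H ∧ F.erase n ⊆ H := by
    intro F hF hnF hroom
    set a := F.min' ⟨n, hnF⟩ with ha
    have hsubJ : F.erase n ⊆ Icc a (n - 1) := by
      intro x hx
      rw [Finset.mem_erase] at hx
      have h1 := F.min'_le x hx.2
      have h2 := (Finset.mem_Icc.mp (hsub F hF.1 hx.2)).2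
      rw [Finset.mem_Icc]
      exact ⟨h1, by omega⟩
    have hJc : (Icc a (n - 1)).card = n - a := by rw [Nat.card_Icc]; omega
    have hec := hcard_erase F hF hnF
    obtain ⟨H, hH1, hH2, hH3⟩ := Finset.exists_subsuperset_card_eq (n := 1 + (F.erase n).card) hsubJ (by omega)
      (by rw [hJc, hec]; omega)
    refine ⟨H, ?_, ?_, hH1⟩
    · exact hUapp F hF hnF H (hH2.trans (Finset.Icc_subset_Icc_right (by omega)))
        (by rw [hH3, hec]; omega)
    · intro hn
      have := Finset.mem_Icc.mp (hH2 hn); omega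
  have htwo : ∀ F, IsFacet Δ F → ∃ F', IsFacet Δ F' ∧ F' ≠ F := by
    intro F hF
    by_contra h
    push_neg at h
    apply hnotfull F hF
    apply Finset.Subset.antisymm (hsub F hF.1)
    intro x hx
    rw [← hV, Finset.mem_sup] at hx
    obtain ⟨G, hG, hxG⟩ := hx
    obtain ⟨F', hF', hGF'⟩ := exists_facet_superset hG
    rw [h F' hF'] at hGF'
    exact hGF' hxG
  have hnbr : ∀ (F : Finset ℕ) (hF : F ∈ facets Δ),
      ∃ F2, IsFacet Δ F2 ∧ F2 ≠ F ∧ (F ∩ F2).card = d := by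
    intro F hF
    obtain ⟨F', hF', hne'⟩ := htwo F (mem_facets'.mp hF)
    have hr := hSC.preconnected ⟨F, hF⟩ ⟨F', mem_facets'.mpr hF'⟩
    obtain ⟨w⟩ := hr
    have key : ∀ (u v : {x // x ∈ facets Δ}) (w : (dualGraph d Δ).Walk u v),
        u ≠ v → ∃ z, (dualGraph d Δ).Adj u z := by
      intro u v w hne
      cases w with
      | nil => exact absurd rfl hne
      | cons h _ => exact ⟨_, h⟩
    obtain ⟨z, hz⟩ := key _ _ w (fun h => hne' (congrArg Subtype.val h).symm)
    rw [dualGraph, SimpleGraph.fromRel_adj] at hz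
    refine ⟨(z : Finset ℕ), mem_facets'.mp z.2, fun h => hz.1 (Subtype.ext h.symm), ?_⟩
    rcases hz.2 with h' | h'
    · exact h'
    · rw [Finset.inter_comm]; exact h'
  have f8 : ∀ F, IsFacet Δ F → n ∈ F → ∃ H, IsFacet Δ H ∧ n ∉ H ∧ F.erase n ⊆ H := by
    intro F hF hnF
    set a := F.min' ⟨n, hnF⟩ with ha
    by_cases hroom : d + 1 ≤ n - a
    · exact L1 F hF hnF hroom
    · push_neg at hroom
      have haF : a ∈ F := F.min'_mem _
      have ha1 : 1 ≤ a := (Finset.mem_Icc.mp (hsub F hF.1 haF)).1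
      have han : a ≤ n := (Finset.mem_Icc.mp (hsub F hF.1 haF)).2
      have hcard : F.card = d + 1 := hP F hF
      have hFsub : F ⊆ Icc a n := fun x hx =>
        Finset.mem_Icc.mpr ⟨F.min'_le x hx, (Finset.mem_Icc.mp (hsub F hF.1 hx)).2⟩
      have hIccCard : (Icc a n).card = n + 1 - a := Nat.card_Icc a n
      have hFeq : F = Icc a n :=
        Finset.eq_of_subset_of_card_le hFsub (by rw [hIccCard, hcard]; omega)
      have hc2 : (Icc a n).card = d + 1 := by rw [← hFeq, hcard]
      have ha2 : 2 ≤ a := by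
        rcases Nat.lt_or_ge a 2 with h | h
        · have ha1' : a = 1 := by omega
          exact absurd (by rw [hFeq, ha1']) (hnotfull F hF)
        · exact h
      obtain ⟨F2, hF2, hne2, hinter⟩ := hnbr F (mem_facets'.mpr hF)
      by_cases hn2 : n ∈ F2
      · have hy : ∃ y, y ∈ F2 ∧ y ∉ F := by
          by_contra h; push_neg at h
          exact hne2 (Finset.eq_of_subset_of_card_le h (by rw [hP F hF, hP F2 hF2]))
        obtain ⟨y, hyF2, hyF⟩ := hy
        have hy1 : 1 ≤ y := (Finset.mem_Icc.mp (hsub F2 hF2.1 hyF2)).1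
        have hyn : y ≤ n := (Finset.mem_Icc.mp (hsub F2 hF2.1 hyF2)).2
        have hya : y < a := by
          by_contra h; push_neg at h
          exact hyF (hFeq ▸ Finset.mem_Icc.mpr ⟨h, hyn⟩)
        have hminF2 : F2.min' ⟨n, hn2⟩ ≤ y := F2.min'_le y hyF2
        refine ⟨Icc (a - 1) (n - 1), ?_, ?_, ?_⟩
        · apply hUapp F2 hF2 hn2
          · intro x hx; rw [Finset.mem_Icc] at hx ⊢; omega
          · rw [Nat.card_Icc]; rw [Nat.card_Icc] at hc2; omega
        · rw [Finset.mem_Icc]; omega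
        · intro x hx
          rw [Finset.mem_erase] at hx
          have h1 : x ∈ Icc a n := hFeq ▸ hx.2
          rw [Finset.mem_Icc] at h1
          rw [Finset.mem_Icc]
          have hxn : x ≠ n := hx.1
          omega
      · have h1 : F ∩ F2 ⊆ F.erase n := fun x hx => by
          rw [Finset.mem_inter] at hx
          exact Finset.mem_erase.mpr ⟨fun h => hn2 (h ▸ hx.2), hx.1⟩
        have hec := hcard_erase F hF hnF
        have h2 : F ∩ F2 = F.erase n :=
          Finset.eq_of_subset_of_card_le h1 (by rw [hec, hinter])
        refine ⟨F2, hF2, hn2, ?_⟩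
        rw [← h2]; exact Finset.inter_subset_right
  have f7 : ∃ F0, IsFacet Δ F0 ∧ n ∉ F0 := by
    obtain ⟨F, hF⟩ := hfrome
    by_cases h : n ∈ F
    · obtain ⟨H, h1, h2, _⟩ := f8 F hF h; exact ⟨H, h1, h2⟩
    · exact ⟨F, hF, h⟩
  have f9 : ∀ G, IsFacet (delC Δ n) G ↔ IsFacet Δ G ∧ n ∉ G := by
    intro G
    constructor
    · rintro ⟨hG, hmax⟩
      rw [delC, Finset.mem_filter] at hG
      obtain ⟨F, hF, hGF⟩ := exists_facet_superset hG.1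
      by_cases hnF : n ∈ F
      · obtain ⟨H, hH, hnH, hFH⟩ := f8 F hF hnF
        have hGH : G ⊆ H := fun x hx =>
          hFH (Finset.mem_erase.mpr ⟨fun h => hG.2 (h ▸ hx), hGF hx⟩)
        have hHdel : H ∈ delC Δ n := Finset.mem_filter.mpr ⟨hH.1, hnH⟩
        have hGeq := hmax H hHdel hGH
        exact ⟨by rw [hGeq]; exact hH, hG.2⟩
      · have hFdel : F ∈ delC Δ n := Finset.mem_filter.mpr ⟨hF.1, hnF⟩
        have hGeq := hmax F hFdel hGF
        exact ⟨by rw [hGeq]; exact hF, hG.2⟩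
    · rintro ⟨⟨hG, hmax⟩, hnG⟩
      refine ⟨Finset.mem_filter.mpr ⟨hG, hnG⟩, fun H hH hGH => ?_⟩
      rw [delC, Finset.mem_filter] at hH
      exact hmax H hH.1 hGH
  have hcardK : ∀ K, K ∈ facets (delC Δ n) → K.card = d + 1 := fun K hK =>
    hP K ((f9 K).mp (mem_facets'.mp hK)).1
  have bridge : ∀ (K K' : Finset ℕ) (hK : K ∈ facets (delC Δ n))
      (hK' : K' ∈ facets (delC Δ n)), d ≤ (K ∩ K').card →
      (dualGraph d (delC Δ n)).Reachable ⟨K, hK⟩ ⟨K', hK'⟩ := by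
    intro K K' hK hK' hd
    have hKc := hcardK K hK
    have hK'c := hcardK K' hK'
    by_cases h : K = K'
    · subst h; exact SimpleGraph.Reachable.refl _
    · have hle : (K ∩ K').card ≤ d := by
        by_contra hgt; push_neg at hgt
        have he : K ∩ K' = K :=
          Finset.eq_of_subset_of_card_le Finset.inter_subset_left (by omega)
        have hKK' : K ⊆ K' := by rw [← he]; exact Finset.inter_subset_right
        exact h (Finset.eq_of_subset_of_card_le hKK' (by omega))
      apply SimpleGraph.Adj.reachable
      rw [dualGraph, SimpleGraph.fromRel_adj]
      exact ⟨fun he => h (congrArg Subtype.val he), Or.inl (le_antisymm hle hd)⟩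
  refine ⟨?_, ?_, ?_, ?_, ?_⟩
  · -- IsComplex
    intro F hF G hGF
    rw [delC, Finset.mem_filter] at hF ⊢
    exact ⟨hC F hF.1 G hGF, fun h => hF.2 (hGF h)⟩
  · -- IsPure
    intro F hF
    exact hP F ((f9 F).mp hF).1
  · -- StronglyConnected
    have hNe : Nonempty {F // F ∈ facets (delC Δ n)} := by
      obtain ⟨F0, h1, h2⟩ := f7
      exact ⟨⟨F0, mem_facets'.mpr ((f9 F0).mpr ⟨h1, h2⟩)⟩⟩
    have main : ∀ (u v : {x // x ∈ facets Δ}) (w : (dualGraph d Δ).Walk u v),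
        ∀ (K K' : Finset ℕ) (hK : K ∈ facets (delC Δ n)) (hK' : K' ∈ facets (delC Δ n)),
        (u : Finset ℕ).erase n ⊆ K → (v : Finset ℕ).erase n ⊆ K' →
        (dualGraph d (delC Δ n)).Reachable ⟨K, hK⟩ ⟨K', hK'⟩ := by
      intro u v w
      induction w with
      | nil =>
        intro K K' hK hK' hcovK hcovK'
        rename_i u'
        have hufac := mem_facets'.mp u'.2
        have huc : (u' : Finset ℕ).card = d + 1 := hP _ hufac
        have hce : d ≤ ((u' : Finset ℕ).erase n).card := by
          by_cases h : n ∈ (u' : Finset ℕ)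
          · rw [Finset.card_erase_of_mem h, huc]; omega
          · rw [Finset.erase_eq_of_notMem h, huc]; omega
        apply bridge
        calc d ≤ ((u' : Finset ℕ).erase n).card := hce
          _ ≤ (K ∩ K').card :=
            Finset.card_le_card (Finset.subset_inter hcovK hcovK')
      | @cons a b c h p ih =>
        intro K K' hK hK' hcovK hcovK'
        rw [dualGraph, SimpleGraph.fromRel_adj] at h
        set F := (a : Finset ℕ) with hFdef
        set F2 := (b : Finset ℕ) with hF2def
        have hFne : F ≠ F2 := fun he => h.1 (Subtype.ext he)
        have hFF2 : (F ∩ F2).card = d := by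
          rcases h.2 with h' | h'
          · exact h'
          · rw [Finset.inter_comm]; exact h'
        have hFfac : IsFacet Δ F := mem_facets'.mp a.2
        have hF2fac : IsFacet Δ F2 := mem_facets'.mp b.2
        have hFc : F.card = d + 1 := hP F hFfac
        have hF2c : F2.card = d + 1 := hP F2 hF2fac
        suffices hstep : ∃ (K1 : Finset ℕ) (hK1 : K1 ∈ facets (delC Δ n)),
            F2.erase n ⊆ K1 ∧ (dualGraph d (delC Δ n)).Reachable ⟨K, hK⟩ ⟨K1, hK1⟩ by
          obtain ⟨K1, hK1, hcov1, hreach⟩ := hstep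
          exact hreach.trans (ih K1 K' hK1 hK' hcov1 hcovK')
        by_cases hn2 : n ∈ F2
        · by_cases hnF : n ∈ F
          · -- hard case: both contain n
            set q := min (F.min' ⟨n, hnF⟩) (F2.min' ⟨n, hn2⟩) with hq
            have hUq : ∀ S ⊆ Icc q n, S.card = d + 1 → IsFacet Δ S := by
              rcases min_cases (F.min' ⟨n, hnF⟩) (F2.min' ⟨n, hn2⟩) with ⟨he, _⟩ | ⟨he, _⟩
              · rw [hq, he]; exact hUapp F hFfac hnF
              · rw [hq, he]; exact hUapp F2 hF2fac hn2
            have hFsubq : F ⊆ Icc q n := fun x hx =>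
              Finset.mem_Icc.mpr ⟨le_trans (min_le_left _ _) (F.min'_le x hx),
                (Finset.mem_Icc.mp (hsub F hFfac.1 hx)).2⟩
            have hF2subq : F2 ⊆ Icc q n := fun x hx =>
              Finset.mem_Icc.mpr ⟨le_trans (min_le_right _ _) (F2.min'_le x hx),
                (Finset.mem_Icc.mp (hsub F2 hF2fac.1 hx)).2⟩
            have hcardun : d + 2 ≤ (F ∪ F2).card := by
              have hui := Finset.card_union_add_card_inter F F2
              have : F ≠ F2 := hFne
              -- card (F ∪ F2) = d + 2
              omega
            have hqn : d + 2 ≤ (Icc q n).card :=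
              le_trans hcardun (Finset.card_le_card (Finset.union_subset hFsubq hF2subq))
            have hqn' : q + d + 1 ≤ n := by rw [Nat.card_Icc] at hqn; omega
            have hJc : (Icc q (n - 1)).card = n - q := by rw [Nat.card_Icc]; omega
            have hJall : ∀ S ⊆ Icc q (n - 1), S.card = d + 1 → S ∈ facets (delC Δ n) := by
              intro S hS hSc
              have hSfac : IsFacet Δ S :=
                hUq S (hS.trans (Finset.Icc_subset_Icc_right (by omega))) hSc
              have hnS : n ∉ S := fun hns' => by
                have := Finset.mem_Icc.mp (hS hns'); omega
              exact mem_facets'.mpr ((f9 S).mpr ⟨hSfac, hnS⟩)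
            have hFer : F.erase n ⊆ Icc q (n - 1) := by
              intro x hx; rw [Finset.mem_erase] at hx
              have h1 := hFsubq hx.2; rw [Finset.mem_Icc] at h1
              have hxn : x ≠ n := hx.1
              rw [Finset.mem_Icc]; omega
            have hF2er : F2.erase n ⊆ Icc q (n - 1) := by
              intro x hx; rw [Finset.mem_erase] at hx
              have h1 := hF2subq hx.2; rw [Finset.mem_Icc] at h1
              have hxn : x ≠ n := hx.1
              rw [Finset.mem_Icc]; omega
            have hFerc : (F.erase n).card = d := by rw [Finset.card_erase_of_mem hnF, hFc]; omega
            have hF2erc : (F2.erase n).card = d := by rw [Finset.card_erase_of_mem hn2, hF2c]; omega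
            obtain ⟨T, hT1, hT2, hT3⟩ := Finset.exists_subsuperset_card_eq (n := 1 + (F.erase n).card) hFer (by omega)
              (by rw [hJc, hFerc]; omega)
            obtain ⟨T2, hT21, hT22, hT23⟩ := Finset.exists_subsuperset_card_eq (n := 1 + (F2.erase n).card) hF2er (by omega)
              (by rw [hJc, hF2erc]; omega)
            rw [hFerc] at hT3
            rw [hF2erc] at hT23
            have hTc : T.card = d + 1 := by omega
            have hT2c : T2.card = d + 1 := by omega
            have hTfac := hJall T hT2 hTc
            have hT2fac := hJall T2 hT22 hT2c
            refine ⟨T2, hT2fac, hT21, ?_⟩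
            have r1 : (dualGraph d (delC Δ n)).Reachable ⟨K, hK⟩ ⟨T, hTfac⟩ := by
              apply bridge
              calc d = (F.erase n).card := hFerc.symm
                _ ≤ (K ∩ T).card :=
                  Finset.card_le_card (Finset.subset_inter hcovK hT1)
            exact r1.trans (johnson_reach d (delC Δ n) (Icc q (n - 1)) hJall _
              T T2 hTfac hT2fac hT2 hT22 hTc hT2c rfl)
          · -- n ∈ F2, n ∉ F : K = F and F2.erase n ⊆ F
            have hKc := hcardK K hK
            have hFK : F ⊆ K := by rw [← Finset.erase_eq_of_notMem hnF]; exact hcovK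
            have hKF : F = K := Finset.eq_of_subset_of_card_le hFK (by omega)
            have h1 : F ∩ F2 ⊆ F2.erase n := fun x hx => by
              rw [Finset.mem_inter] at hx
              exact Finset.mem_erase.mpr ⟨fun he => hnF (he ▸ hx.1), hx.2⟩
            have h2 : F ∩ F2 = F2.erase n :=
              Finset.eq_of_subset_of_card_le h1
                (by rw [Finset.card_erase_of_mem hn2, hF2c, hFF2]; omega)
            refine ⟨K, hK, ?_, SimpleGraph.Reachable.refl _⟩
            rw [← hKF, ← h2]; exact Finset.inter_subset_left
        · -- n ∉ F2
          have hK1 : F2 ∈ facets (delC Δ n) := mem_facets'.mpr ((f9 F2).mpr ⟨hF2fac, hn2⟩)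
          refine ⟨F2, hK1, Finset.erase_subset n F2, ?_⟩
          apply bridge
          have hsub1 : F ∩ F2 ⊆ K ∩ F2 := fun x hx => by
            rw [Finset.mem_inter] at hx ⊢
            exact ⟨hcovK (Finset.mem_erase.mpr ⟨fun he => hn2 (he ▸ hx.2), hx.1⟩), hx.2⟩
          calc d = (F ∩ F2).card := hFF2.symm
            _ ≤ (K ∩ F2).card := Finset.card_le_card hsub1
    show (dualGraph d (delC Δ n)).Connected
    rw [SimpleGraph.connected_iff]
    refine ⟨?_, hNe⟩
    rintro ⟨K, hK⟩ ⟨K', hK'⟩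
    have hK1 := (f9 K).mp (mem_facets'.mp hK)
    have hK'1 := (f9 K').mp (mem_facets'.mp hK')
    obtain ⟨w⟩ := hSC.preconnected ⟨K, mem_facets'.mpr hK1.1⟩ ⟨K', mem_facets'.mpr hK'1.1⟩
    exact main _ _ w K K' hK hK'
      (by rw [Finset.erase_eq_of_notMem hK1.2])
      (by rw [Finset.erase_eq_of_notMem hK'1.2])
  · -- UnitIntervalOrder
    intro G hG hGne S hS hc
    obtain ⟨hGfac, hnG⟩ := (f9 G).mp hG
    have hSfac : IsFacet Δ S := hU G hGfac hGne S hS hc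
    have hnS : n ∉ S := by
      intro hns'
      have h1 := Finset.mem_Icc.mp (hS hns')
      have h2 := (Finset.mem_Icc.mp (hsub G hGfac.1 (G.max'_mem hGne))).2
      have h3 : G.max' hGne = n := le_antisymm h2 h1.2
      exact hnG (h3 ▸ G.max'_mem hGne)
    exact (f9 S).mpr ⟨hSfac, hnS⟩
  · -- vertex set
    apply le_antisymm
    · apply Finset.sup_le
      intro G hG
      rw [delC, Finset.mem_filter] at hG
      intro x hx
      have hxb := Finset.mem_Icc.mp (hsub G hG.1 hx)
      have hxn : x ≠ n := fun h => hG.2 (h ▸ hx)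
      rw [Finset.mem_Icc]
      omega
    · intro x hx
      rw [Finset.mem_Icc] at hx
      have hxn : x ∈ Icc 1 n := Finset.mem_Icc.mpr ⟨hx.1, by omega⟩
      rw [← hV, Finset.mem_sup] at hxn
      obtain ⟨G, hG, hxG⟩ := hxn
      obtain ⟨F, hF, hGF⟩ := exists_facet_superset hG
      have hxF : x ∈ F := hGF hxG
      by_cases hnF : n ∈ F
      · obtain ⟨H, hH, hnH, hFH⟩ := f8 F hF hnF
        have hxH : x ∈ H := hFH (Finset.mem_erase.mpr ⟨by omega, hxF⟩)
        exact Finset.mem_sup.mpr ⟨H, Finset.mem_filter.mpr ⟨hH.1, hnH⟩, hxH⟩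
      · exact Finset.mem_sup.mpr ⟨F, Finset.mem_filter.mpr ⟨hF.1, hnF⟩, hxF⟩
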